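/- Given weight constraint programs P and Q over a common language, let or(P,Q) be obtained by adding fresh atoms p and q, adding p to the body of each rule of P and q to the body of each rule of Q, and adding the rule 1 ≤ {p = 1, q = 1} ≤ 1. Then or(P,Q) has an answer set if and only if at least one of P and Q has an answer set. -/

import Mathlib

open scoped Classical

inductive Lit where
  | pos : ℕ → Lit
  | neg : ℕ → Lit
deriving DecidableEq

/-- A set of literals is consistent if it contains no complementary pair. -/
def Consistent (X : Set Lit) : Prop :=
  ∀ a : ℕ, ¬ (Lit.pos a ∈ X ∧ Lit.neg a ∈ X)

/-- A rule element: a literal or a literal prefixed with `not`. -/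
inductive RElem where
  | pos : Lit → RElem
  | neg : Lit → RElem
deriving DecidableEq

def SatRE (X : Set Lit) : RElem → Prop
  | RElem.pos l => l ∈ X
  | RElem.neg l => l ∉ X

/-- The literal of a rule element. -/
def reLit : RElem → Lit
  | RElem.pos l => l
  | RElem.neg l => l

/-- A weight constraint L ≤ S ≤ U, where S is a (multi)set of weight assignments
e = w (rule element, weight) and L, U are reals or ±∞. -/
structure WC where
  lb : EReal
  S : Multiset (RElem × ℝ)
  ub : EReal

/-- v(S,X): the sum of the weights of the assignments whose rule element X satisfies. -/
noncomputable def wval (X : Set Lit) (S : Multiset (RElem × ℝ)) : ℝ :=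
  ((S.filter fun p => SatRE X p.1).map Prod.snd).sum

def SatWC (X : Set Lit) (C : WC) : Prop :=
  C.lb ≤ (wval X C.S : EReal) ∧ (wval X C.S : EReal) ≤ C.ub

/-- A WCP rule C0 ← C1,...,Cn. -/
structure WRule where
  head : WC
  body : List WC

abbrev WProg := Set WRule

def isPosRE (p : RElem × ℝ) : Prop := ∃ l : Lit, p.1 = RElem.pos l

/-- In a weight constraint program, heads contain no negative rule elements. -/
def HeadPos (P : WProg) : Prop := ∀ r ∈ P, ∀ p ∈ r.head.S, isPosRE p

def SatWRule (X : Set Lit) (r : WRule) : Prop :=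
  (∀ C ∈ r.body, SatWC X C) → SatWC X r.head

def SatWProg (X : Set Lit) (P : WProg) : Prop := ∀ r ∈ P, SatWRule X r

/-- The reduct (L ≤ S)^X = L − v(S∖S', X) ≤ S', where S' is the positive part of S. -/
noncomputable def RedLS (X : Set Lit) (C : WC) : WC :=
  ⟨C.lb - (wval X (C.S.filter fun p => ¬ isPosRE p) : EReal),
    C.S.filter isPosRE, ⊤⟩

/-- The weight constraint 1 ≤ {l = 1}, representing the literal l. -/
noncomputable def litWC (l : Lit) : WC := ⟨(1 : EReal), {(RElem.pos l, (1 : ℝ))}, ⊤⟩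

/-- The weight constraint 1 ≤ {not l = 1}, representing `not l`. -/
noncomputable def notWC (l : Lit) : WC := ⟨(1 : EReal), {(RElem.neg l, (1 : ℝ))}, ⊤⟩

/-- ⊥, i.e. the weight constraint 1 ≤ {}. -/
noncomputable def botWC : WC := ⟨(1 : EReal), 0, ⊤⟩

/-- The reduct of a WCP rule with respect to X: all rules e ← (L1 ≤ S1)^X,...,(Ln ≤ Sn)^X
for head literals e with X ⊨ e and X ⊨ Si ≤ Ui for all i. -/
noncomputable def WReductRule (X : Set Lit) (r : WRule) : WProg :=
  {r' | ∃ l : Lit, (∃ w : ℝ, (RElem.pos l, w) ∈ r.head.S) ∧ l ∈ X ∧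
    (∀ C ∈ r.body, (wval X C.S : EReal) ≤ C.ub) ∧
    r' = ⟨litWC l, r.body.map (RedLS X)⟩}

noncomputable def WReductProg (X : Set Lit) (P : WProg) : WProg :=
  {r' | ∃ r ∈ P, r' ∈ WReductRule X r}

/-- X is an answer set for P if X ⊨ P and no proper subset of X satisfies P^X. -/
def AnswerSetW (X : Set Lit) (P : WProg) : Prop :=
  Consistent X ∧ SatWProg X P ∧
    ∀ Z : Set Lit, Z ⊂ X → ¬ SatWProg Z (WReductProg X P)

def SEModelW (P : WProg) (X Y : Set Lit) : Prop :=
  Consistent X ∧ Consistent Y ∧ X ⊆ Y ∧ SatWProg Y P ∧ SatWProg X (WReductProg Y P)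

def StrongEqW (P Q : WProg) : Prop :=
  ∀ R : WProg, HeadPos R →
    ∀ Y : Set Lit, AnswerSetW Y (P ∪ R) ↔ AnswerSetW Y (Q ∪ R)

/-- A weight constraint program is ¬-free if classical negation occurs nowhere in it. -/
def WProgNegFree (P : WProg) : Prop :=
  ∀ r ∈ P, (∀ p ∈ r.head.S, ∃ a : ℕ, reLit p.1 = Lit.pos a) ∧
    ∀ C ∈ r.body, ∀ p ∈ C.S, ∃ a : ℕ, reLit p.1 = Lit.pos a

def AtomsOnly (Z : Set Lit) : Prop := ∀ l ∈ Z, ∃ a, l = Lit.pos a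

/-- Add the atom a to the body of a rule. -/
noncomputable def addBody (a : ℕ) (r : WRule) : WRule := ⟨r.head, litWC (Lit.pos a) :: r.body⟩

/-- or(P,Q): add p to each body of P, q to each body of Q, plus 1 ≤ {p=1, q=1} ≤ 1. -/
def orProg (P Q : WProg) (p q : ℕ) : WProg :=
  (addBody p '' P) ∪ (addBody q '' Q) ∪
    {⟨⟨(1 : EReal), {(RElem.pos (Lit.pos p), (1 : ℝ)), (RElem.pos (Lit.pos q), (1 : ℝ))},
       (1 : EReal)⟩, []⟩}

/-- Atoms occurring in a WCP rule. -/
def wruleAtoms (r : WRule) : Set ℕ :=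
  {a | (∃ pr ∈ r.head.S, reLit pr.1 = Lit.pos a ∨ reLit pr.1 = Lit.neg a) ∨
    ∃ C ∈ r.body, ∃ pr ∈ C.S, reLit pr.1 = Lit.pos a ∨ reLit pr.1 = Lit.neg a}
-- basic wval computation lemmas
lemma wval_zero (X : Set Lit) : wval X 0 = 0 := by simp [wval]

lemma wval_cons (X : Set Lit) (pr : RElem × ℝ) (S : Multiset (RElem × ℝ)) :
    wval X (pr ::ₘ S) = (if SatRE X pr.1 then pr.2 else 0) + wval X S := by
  unfold wval
  rw [Multiset.filter_cons]
  split <;> simp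

lemma wval_singleton (X : Set Lit) (e : RElem) (w : ℝ) :
    wval X {(e, w)} = if SatRE X e then w else 0 := by
  have := wval_cons X (e, w) 0
  simpa [wval_zero] using this

lemma wval_congr {X X' : Set Lit} {S : Multiset (RElem × ℝ)}
    (h : ∀ pr ∈ S, (reLit pr.1 ∈ X ↔ reLit pr.1 ∈ X')) :
    wval X S = wval X' S := by
  unfold wval
  have hf : (S.filter fun pr => SatRE X pr.1) = S.filter fun pr => SatRE X' pr.1 := by
    apply Multiset.filter_congr
    intro pr hpr
    have hl := h pr hpr
    cases he : pr.1 with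
    | pos l => rw [he] at hl; simpa [SatRE, reLit] using hl
    | neg l => rw [he] at hl; simp only [SatRE, reLit] at hl ⊢; exact not_congr hl
  rw [hf]

lemma sat_litWC (X : Set Lit) (l : Lit) : SatWC X (litWC l) ↔ l ∈ X := by
  unfold SatWC litWC
  rw [wval_singleton]
  constructor
  · rintro ⟨h1, -⟩
    by_contra hl
    simp only [SatRE, hl, if_false] at h1
    exact not_lt.2 h1 (by exact_mod_cast zero_lt_one (α := EReal))
  · intro hl
    simp only [SatRE, hl, if_true]
    exact ⟨by norm_num, le_top⟩

lemma RedLS_litWC (X : Set Lit) (l : Lit) : RedLS X (litWC l) = litWC l := by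
  unfold RedLS litWC isPosRE
  have h1 : (({(RElem.pos l, (1:ℝ))} : Multiset (RElem × ℝ)).filter
      fun pr => ¬ ∃ l' : Lit, pr.1 = RElem.pos l') = 0 := by
    rw [Multiset.filter_singleton]
    simp
  have h2 : (({(RElem.pos l, (1:ℝ))} : Multiset (RElem × ℝ)).filter
      fun pr => ∃ l' : Lit, pr.1 = RElem.pos l') = {(RElem.pos l, (1:ℝ))} := by
    rw [Multiset.filter_singleton]
    simp
  rw [h1, h2, wval_zero]
  simp
lemma SatWC_congr {X X' : Set Lit} {C : WC}
    (h : ∀ pr ∈ C.S, (reLit pr.1 ∈ X ↔ reLit pr.1 ∈ X')) :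
    SatWC X C ↔ SatWC X' C := by
  unfold SatWC
  rw [wval_congr h]

lemma SatRedLS_congr {X X' Z Z' : Set Lit} {C : WC}
    (hXX' : ∀ pr ∈ C.S, (reLit pr.1 ∈ X ↔ reLit pr.1 ∈ X'))
    (hZZ' : ∀ pr ∈ C.S, (reLit pr.1 ∈ Z ↔ reLit pr.1 ∈ Z')) :
    SatWC Z (RedLS X C) ↔ SatWC Z' (RedLS X' C) := by
  unfold SatWC RedLS
  simp only
  rw [wval_congr (fun pr hpr => hXX' pr (Multiset.mem_filter.mp hpr).1),
    wval_congr (X := Z) (X' := Z') (fun pr hpr => hZZ' pr (Multiset.mem_filter.mp hpr).1)]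

/-- The choice rule of orProg. -/
noncomputable def choiceRule (p q : ℕ) : WRule :=
  ⟨⟨(1 : EReal), {(RElem.pos (Lit.pos p), (1 : ℝ)), (RElem.pos (Lit.pos q), (1 : ℝ))},
     (1 : EReal)⟩, []⟩

lemma mem_orProg {P Q : WProg} {p q : ℕ} {r : WRule} :
    r ∈ orProg P Q p q ↔
      (∃ r₀ ∈ P, r = addBody p r₀) ∨ (∃ r₀ ∈ Q, r = addBody q r₀) ∨ r = choiceRule p q := by
  unfold orProg choiceRule
  simp only [Set.mem_union, Set.mem_image, Set.mem_singleton_iff]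
  constructor
  · rintro ((⟨r₀, h1, h2⟩ | ⟨r₀, h1, h2⟩) | h)
    · exact Or.inl ⟨r₀, h1, h2.symm⟩
    · exact Or.inr (Or.inl ⟨r₀, h1, h2.symm⟩)
    · exact Or.inr (Or.inr h)
  · rintro (⟨r₀, h1, h2⟩ | ⟨r₀, h1, h2⟩ | h)
    · exact Or.inl (Or.inl ⟨r₀, h1, h2.symm⟩)
    · exact Or.inl (Or.inr ⟨r₀, h1, h2.symm⟩)
    · exact Or.inr h

lemma mem_WReductRule {X : Set Lit} {r r' : WRule} :
    r' ∈ WReductRule X r ↔ ∃ l : Lit, (∃ w : ℝ, (RElem.pos l, w) ∈ r.head.S) ∧ l ∈ X ∧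
      (∀ C ∈ r.body, (wval X C.S : EReal) ≤ C.ub) ∧
      r' = ⟨litWC l, r.body.map (RedLS X)⟩ := Iff.rfl

lemma mem_WReductProg {X : Set Lit} {P : WProg} {r' : WRule} :
    r' ∈ WReductProg X P ↔ ∃ r ∈ P, r' ∈ WReductRule X r := Iff.rfl

/-- From freshness: every rule element in the head avoids the fresh atom. -/
lemma head_avoid {r : WRule} {a : ℕ} (h : a ∉ wruleAtoms r) :
    ∀ pr ∈ r.head.S, reLit pr.1 ≠ Lit.pos a ∧ reLit pr.1 ≠ Lit.neg a := by
  intro pr hpr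
  constructor <;> intro he <;> exact h (Or.inl ⟨pr, hpr, by rw [he]; simp⟩)

lemma body_avoid {r : WRule} {a : ℕ} (h : a ∉ wruleAtoms r) :
    ∀ C ∈ r.body, ∀ pr ∈ C.S, reLit pr.1 ≠ Lit.pos a ∧ reLit pr.1 ≠ Lit.neg a := by
  intro C hC pr hpr
  constructor <;> intro he <;> exact h (Or.inr ⟨C, hC, pr, hpr, by rw [he]; simp⟩)
/-- Removing a literal that heads no rule preserves satisfaction of the reduct. -/
lemma removal {P : WProg} {X : Set Lit} {l₀ : Lit}
    (hhead : ∀ r ∈ P, ∀ pr ∈ r.head.S, reLit pr.1 ≠ l₀) :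
    SatWProg (X \ {l₀}) (WReductProg X P) := by
  rintro r' ⟨r, hrP, l, ⟨w, hw⟩, hlX, hub, rfl⟩
  intro _
  rw [sat_litWC]
  refine ⟨hlX, ?_⟩
  have := hhead r hrP (RElem.pos l, w) hw
  simpa [reLit] using this

lemma not_mem_of_head_avoid {P : WProg} {X : Set Lit} {l₀ : Lit}
    (hX : AnswerSetW X P) (hhead : ∀ r ∈ P, ∀ pr ∈ r.head.S, reLit pr.1 ≠ l₀) :
    l₀ ∉ X := by
  intro hl
  exact hX.2.2 (X \ {l₀}) (Set.sdiff_singleton_ssubset.mpr hl) (removal hhead)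

lemma fresh_not_mem {P : WProg} {X : Set Lit} {a : ℕ}
    (hX : AnswerSetW X P) (hf : ∀ r ∈ P, a ∉ wruleAtoms r) :
    Lit.pos a ∉ X ∧ Lit.neg a ∉ X :=
  ⟨not_mem_of_head_avoid hX (fun r hr pr hpr => (head_avoid (hf r hr) pr hpr).1),
   not_mem_of_head_avoid hX (fun r hr pr hpr => (head_avoid (hf r hr) pr hpr).2)⟩

lemma sat_choice_head {Y : Set Lit} {p q : ℕ} :
    SatWC Y (choiceRule p q).head ↔
      (Lit.pos p ∈ Y ∧ Lit.pos q ∉ Y) ∨ (Lit.pos p ∉ Y ∧ Lit.pos q ∈ Y) := by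
  unfold SatWC choiceRule
  simp only
  rw [show ({(RElem.pos (Lit.pos p), (1:ℝ)), (RElem.pos (Lit.pos q), (1:ℝ))} :
      Multiset (RElem × ℝ)) = (RElem.pos (Lit.pos p), (1:ℝ)) ::ₘ
        {(RElem.pos (Lit.pos q), (1:ℝ))} from rfl]
  rw [wval_cons, wval_singleton]
  have h1 : ∀ x : ℝ, ((1:EReal) ≤ (x : EReal) ∧ (x : EReal) ≤ (1:EReal)) ↔ x = 1 := by
    intro x
    rw [show (1:EReal) = ((1:ℝ):EReal) from rfl, EReal.coe_le_coe_iff, EReal.coe_le_coe_iff]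
    constructor
    · rintro ⟨h, h'⟩; linarith
    · rintro rfl; exact ⟨le_refl _, le_refl _⟩
  rw [h1]
  by_cases hp : Lit.pos p ∈ Y <;> by_cases hq : Lit.pos q ∈ Y <;>
    simp [SatRE, hp, hq]

lemma mem_WReductRule_choice {Y : Set Lit} {p q : ℕ} {r' : WRule} :
    r' ∈ WReductRule Y (choiceRule p q) ↔
      (Lit.pos p ∈ Y ∧ r' = ⟨litWC (Lit.pos p), []⟩) ∨
      (Lit.pos q ∈ Y ∧ r' = ⟨litWC (Lit.pos q), []⟩) := by
  rw [mem_WReductRule]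
  unfold choiceRule
  simp only [List.not_mem_nil, false_implies, implies_true, true_and, List.map_nil]
  constructor
  · rintro ⟨l, ⟨w, hw⟩, hlY, hr'⟩
    simp only [Multiset.insert_eq_cons, Multiset.mem_cons, Multiset.mem_singleton,
      Prod.mk.injEq, RElem.pos.injEq] at hw
    rcases hw with ⟨hl, -⟩ | ⟨hl, -⟩
    · exact Or.inl ⟨hl ▸ hlY, by rw [hr', hl]⟩
    · exact Or.inr ⟨hl ▸ hlY, by rw [hr', hl]⟩
  · rintro (⟨h, rfl⟩ | ⟨h, rfl⟩)
    · exact ⟨Lit.pos p, ⟨1, by simp⟩, h, rfl⟩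
    · exact ⟨Lit.pos q, ⟨1, by simp⟩, h, rfl⟩

lemma WReductRule_addBody {X : Set Lit} {a : ℕ} {r : WRule} {r' : WRule} :
    r' ∈ WReductRule X (addBody a r) ↔
      ∃ l : Lit, (∃ w : ℝ, (RElem.pos l, w) ∈ r.head.S) ∧ l ∈ X ∧
      (SatWC X (litWC (Lit.pos a)) → True) ∧
      ((wval X (litWC (Lit.pos a)).S : EReal) ≤ ⊤) ∧
      (∀ C ∈ r.body, (wval X C.S : EReal) ≤ C.ub) ∧
      r' = ⟨litWC l, litWC (Lit.pos a) :: r.body.map (RedLS X)⟩ := by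
  rw [mem_WReductRule]
  unfold addBody
  constructor
  · rintro ⟨l, hw, hl, hub, rfl⟩
    refine ⟨l, hw, hl, fun _ => trivial, le_top, fun C hC => hub C (List.mem_cons_of_mem _ hC), ?_⟩
    simp [RedLS_litWC]
  · rintro ⟨l, hw, hl, -, -, hub, rfl⟩
    refine ⟨l, hw, hl, ?_, ?_⟩
    · intro C hC
      rcases List.mem_cons.mp hC with rfl | hC
      · exact le_top
      · exact hub C hC
    · simp [RedLS_litWC]
lemma mem_insert_iff_of_ne {l l₀ : Lit} {X : Set Lit} (h : l ≠ l₀) :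
    l ∈ insert l₀ X ↔ l ∈ X := by simp [h]

lemma mem_diff_iff_of_ne {l l₀ : Lit} {X : Set Lit} (h : l ≠ l₀) :
    l ∈ X \ {l₀} ↔ l ∈ X := by simp [h]

lemma main1 {P Q : WProg} {p q : ℕ} (hpq : p ≠ q)
    (hfP : ∀ r ∈ P, p ∉ wruleAtoms r ∧ q ∉ wruleAtoms r)
    {X : Set Lit} (hX : AnswerSetW X P) :
    AnswerSetW (insert (Lit.pos p) X) (orProg P Q p q) := by
  obtain ⟨hcons, hsat, hmin⟩ := hX
  have hX' : AnswerSetW X P := ⟨hcons, hsat, hmin⟩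
  have hpX := fresh_not_mem hX' (fun r hr => (hfP r hr).1)
  have hqX := fresh_not_mem hX' (fun r hr => (hfP r hr).2)
  set Y := insert (Lit.pos p) X with hY
  have hpY : Lit.pos p ∈ Y := Set.mem_insert _ _
  have hqY : Lit.pos q ∉ Y := by
    intro h
    rcases Set.mem_insert_iff.mp h with h | h
    · exact hpq (by injection h; omega)
    · exact hqX.1 h
  -- agreement between X and Y on rule bodies/heads of P
  have agrB : ∀ r₀ ∈ P, ∀ C ∈ r₀.body, ∀ pr ∈ C.S,
      (reLit pr.1 ∈ X ↔ reLit pr.1 ∈ Y) := by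
    intro r₀ hr₀ C hC pr hpr
    exact (mem_insert_iff_of_ne (body_avoid (hfP r₀ hr₀).1 C hC pr hpr).1).symm
  have agrH : ∀ r₀ ∈ P, ∀ pr ∈ r₀.head.S, (reLit pr.1 ∈ X ↔ reLit pr.1 ∈ Y) := by
    intro r₀ hr₀ pr hpr
    exact (mem_insert_iff_of_ne (head_avoid (hfP r₀ hr₀).1 pr hpr).1).symm
  refine ⟨?_, ?_, ?_⟩
  · -- consistency
    intro a ⟨ha1, ha2⟩
    have ha2' : Lit.neg a ∈ X := by
      rcases Set.mem_insert_iff.mp ha2 with h | h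
      · exact absurd h (by simp)
      · exact h
    rcases Set.mem_insert_iff.mp ha1 with h | h
    · have : a = p := by injection h
      exact hpX.2 (this ▸ ha2')
    · exact hcons a ⟨h, ha2'⟩
  · -- satisfaction
    intro r hr
    rcases mem_orProg.mp hr with ⟨r₀, hr₀, rfl⟩ | ⟨r₀, hr₀, rfl⟩ | rfl
    · intro hbody
      have hXbody : ∀ C ∈ r₀.body, SatWC X C := by
        intro C hC
        exact (SatWC_congr (agrB r₀ hr₀ C hC)).mpr
          (hbody C (List.mem_cons_of_mem _ hC))
      have hXhead := hsat r₀ hr₀ hXbody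
      exact (SatWC_congr (agrH r₀ hr₀)).mp hXhead
    · intro hbody
      have := (sat_litWC Y (Lit.pos q)).mp (hbody _ List.mem_cons_self)
      exact absurd this hqY
    · intro _
      exact sat_choice_head.mpr (Or.inl ⟨hpY, hqY⟩)
  · -- minimality
    intro Z hZY hZsat
    have hpZ : Lit.pos p ∈ Z := by
      have hrule : (⟨litWC (Lit.pos p), []⟩ : WRule) ∈ WReductProg Y (orProg P Q p q) :=
        ⟨choiceRule p q, mem_orProg.mpr (Or.inr (Or.inr rfl)),
          mem_WReductRule_choice.mpr (Or.inl ⟨hpY, rfl⟩)⟩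
      have := hZsat _ hrule (by intro C hC; exact absurd hC List.not_mem_nil)
      exact (sat_litWC _ _).mp this
    set W := Z \ {Lit.pos p} with hW
    have hWX : W ⊆ X := by
      intro l hl
      obtain ⟨hlZ, hlp⟩ := hl
      rcases Set.mem_insert_iff.mp (hZY.1 hlZ) with h | h
      · exact absurd h hlp
      · exact h
    have hWss : W ⊂ X := by
      refine (Set.ssubset_iff_of_subset hWX).mpr ?_
      obtain ⟨l, hlY, hlZ⟩ := Set.exists_of_ssubset hZY
      have hlp : l ≠ Lit.pos p := fun h => hlZ (h ▸ hpZ)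
      have hlX : l ∈ X := by
        rcases Set.mem_insert_iff.mp hlY with h | h
        · exact absurd h hlp
        · exact h
      exact ⟨l, hlX, fun h => hlZ h.1⟩
    refine absurd ?_ (hmin W hWss)
    -- W satisfies the reduct of P wrt X
    rintro r' ⟨r₀, hr₀P, hr'⟩
    obtain ⟨l, hw, hlX, hub, rfl⟩ := mem_WReductRule.mp hr'
    intro hbody
    have hlY : l ∈ Y := Set.mem_insert_of_mem _ hlX
    have hrule' : (⟨litWC l, litWC (Lit.pos p) :: r₀.body.map (RedLS Y)⟩ : WRule) ∈
        WReductProg Y (orProg P Q p q) := by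
      refine ⟨addBody p r₀, mem_orProg.mpr (Or.inl ⟨r₀, hr₀P, rfl⟩),
        WReductRule_addBody.mpr ⟨l, hw, hlY, fun _ => trivial, le_top, ?_, rfl⟩⟩
      intro C hC
      rw [← wval_congr (agrB r₀ hr₀P C hC)]
      exact hub C hC
    have agrW : ∀ C ∈ r₀.body, ∀ pr ∈ C.S, (reLit pr.1 ∈ W ↔ reLit pr.1 ∈ Z) := by
      intro C hC pr hpr
      exact mem_diff_iff_of_ne (body_avoid (hfP r₀ hr₀P).1 C hC pr hpr).1
    have hZl : SatWC Z (litWC l) := by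
      apply hZsat _ hrule'
      intro C hC
      rcases List.mem_cons.mp hC with rfl | hC
      · exact (sat_litWC _ _).mpr hpZ
      · obtain ⟨C₀, hC₀, rfl⟩ := List.mem_map.mp hC
        exact (SatRedLS_congr (agrB r₀ hr₀P C₀ hC₀) (agrW C₀ hC₀)).mp
          (hbody _ (List.mem_map.mpr ⟨C₀, hC₀, rfl⟩))
    have hlZ : l ∈ Z := (sat_litWC _ _).mp hZl
    have hlp : l ≠ Lit.pos p := fun h => hpX.1 (h ▸ hlX)
    exact (sat_litWC _ _).mpr ⟨hlZ, hlp⟩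
lemma main2 {P Q : WProg} {p q : ℕ}
    (hfP : ∀ r ∈ P, p ∉ wruleAtoms r ∧ q ∉ wruleAtoms r)
    {Y : Set Lit} (hY : AnswerSetW Y (orProg P Q p q)) (hpY : Lit.pos p ∈ Y) :
    AnswerSetW (Y \ {Lit.pos p}) P := by
  obtain ⟨hcons, hsat, hmin⟩ := hY
  have hchoice : SatWC Y (choiceRule p q).head :=
    hsat (choiceRule p q) (mem_orProg.mpr (Or.inr (Or.inr rfl)))
      (by intro C hC; exact absurd hC List.not_mem_nil)
  have hqY : Lit.pos q ∉ Y := by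
    rcases sat_choice_head.mp hchoice with ⟨-, h⟩ | ⟨h, -⟩
    · exact h
    · exact absurd hpY h
  set X := Y \ {Lit.pos p} with hXdef
  have hXY : X ⊆ Y := Set.diff_subset
  have hpX : Lit.pos p ∉ X := fun h => h.2 rfl
  have hqX : Lit.pos q ∉ X := fun h => hqY h.1
  -- agreement between X and Y on P's rules
  have agrB : ∀ r₀ ∈ P, ∀ C ∈ r₀.body, ∀ pr ∈ C.S,
      (reLit pr.1 ∈ X ↔ reLit pr.1 ∈ Y) := by
    intro r₀ hr₀ C hC pr hpr
    exact mem_diff_iff_of_ne (body_avoid (hfP r₀ hr₀).1 C hC pr hpr).1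
  have agrH : ∀ r₀ ∈ P, ∀ pr ∈ r₀.head.S, (reLit pr.1 ∈ X ↔ reLit pr.1 ∈ Y) := by
    intro r₀ hr₀ pr hpr
    exact mem_diff_iff_of_ne (head_avoid (hfP r₀ hr₀).1 pr hpr).1
  refine ⟨fun a h => hcons a ⟨hXY h.1, hXY h.2⟩, ?_, ?_⟩
  · -- satisfaction
    intro r₀ hr₀ hbody
    have hYbody : ∀ C ∈ (addBody p r₀).body, SatWC Y C := by
      intro C hC
      rcases List.mem_cons.mp hC with rfl | hC
      · exact (sat_litWC _ _).mpr hpY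
      · exact (SatWC_congr (agrB r₀ hr₀ C hC)).mp (hbody C hC)
    have hYhead := hsat (addBody p r₀) (mem_orProg.mpr (Or.inl ⟨r₀, hr₀, rfl⟩)) hYbody
    exact (SatWC_congr (agrH r₀ hr₀)).mpr hYhead
  · -- minimality
    intro Z hZX hZsat
    set Z' := insert (Lit.pos p) Z with hZ'
    have hZ'Y : Z' ⊆ Y := by
      intro l hl
      rcases Set.mem_insert_iff.mp hl with rfl | hl
      · exact hpY
      · exact hXY (hZX.1 hl)
    have hZ'ss : Z' ⊂ Y := by
      refine (Set.ssubset_iff_of_subset hZ'Y).mpr ?_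
      obtain ⟨l, hlX, hlZ⟩ := Set.exists_of_ssubset hZX
      refine ⟨l, hXY hlX, ?_⟩
      intro h
      rcases Set.mem_insert_iff.mp h with rfl | h
      · exact hpX hlX
      · exact hlZ h
    refine absurd ?_ (hmin Z' hZ'ss)
    rintro r' ⟨r, hr, hr'⟩
    rcases mem_orProg.mp hr with ⟨r₀, hr₀, rfl⟩ | ⟨r₀, hr₀, rfl⟩ | rfl
    · -- rules from P
      obtain ⟨l, hw, hlY, -, -, hub, rfl⟩ := WReductRule_addBody.mp hr'
      intro hbody'
      have hlp : l ≠ Lit.pos p := by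
        have := (head_avoid (hfP r₀ hr₀).1 (RElem.pos l, Classical.choose hw)
          (Classical.choose_spec hw)).1
        simpa [reLit] using this
      have hlX : l ∈ X := ⟨hlY, hlp⟩
      have agrZ : ∀ C ∈ r₀.body, ∀ pr ∈ C.S, (reLit pr.1 ∈ Z ↔ reLit pr.1 ∈ Z') := by
        intro C hC pr hpr
        exact (mem_insert_iff_of_ne (body_avoid (hfP r₀ hr₀).1 C hC pr hpr).1).symm
      have hrule : (⟨litWC l, r₀.body.map (RedLS X)⟩ : WRule) ∈ WReductProg X P := by
        refine ⟨r₀, hr₀, mem_WReductRule.mpr ⟨l, hw, hlX, ?_, rfl⟩⟩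
        intro C hC
        rw [wval_congr (agrB r₀ hr₀ C hC)]
        exact hub C hC
      have hZl : SatWC Z (litWC l) := by
        apply hZsat _ hrule
        intro C hC
        obtain ⟨C₀, hC₀, rfl⟩ := List.mem_map.mp hC
        exact (SatRedLS_congr (agrB r₀ hr₀ C₀ hC₀) (agrZ C₀ hC₀)).mpr
          (hbody' _ (List.mem_cons_of_mem _ (List.mem_map.mpr ⟨C₀, hC₀, rfl⟩)))
      exact (sat_litWC _ _).mpr (Set.mem_insert_of_mem _ ((sat_litWC _ _).mp hZl))
    · -- rules from Q : body contains pos q which fails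
      obtain ⟨l, hw, hlY, -, -, hub, rfl⟩ := WReductRule_addBody.mp hr'
      intro hbody'
      have := (sat_litWC _ _).mp (hbody' _ List.mem_cons_self)
      exact absurd (hZ'Y this) hqY
    · -- choice rule reduct
      rcases mem_WReductRule_choice.mp hr' with ⟨-, rfl⟩ | ⟨h, -⟩
      · intro _
        exact (sat_litWC _ _).mpr (Set.mem_insert _ _)
      · exact absurd h hqY
lemma orProg_comm (P Q : WProg) (p q : ℕ) : orProg P Q p q = orProg Q P q p := by
  unfold orProg
  rw [Set.union_comm (addBody p '' P) (addBody q '' Q)]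
  have h : ({(RElem.pos (Lit.pos p), (1:ℝ)), (RElem.pos (Lit.pos q), (1:ℝ))} :
      Multiset (RElem × ℝ)) = {(RElem.pos (Lit.pos q), (1:ℝ)), (RElem.pos (Lit.pos p), (1:ℝ))} :=
    Multiset.cons_swap _ _ _
  rw [h]
/-- or(P,Q) has an answer set iff at least one of P and Q does. -/
theorem stmt19 (P Q : WProg) (p q : ℕ) (hpq : p ≠ q)
    (hP : HeadPos P) (hQ : HeadPos Q)
    (hfresh : ∀ r ∈ P ∪ Q, p ∉ wruleAtoms r ∧ q ∉ wruleAtoms r) :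
    (∃ Y : Set Lit, AnswerSetW Y (orProg P Q p q)) ↔
      ((∃ Y : Set Lit, AnswerSetW Y P) ∨ (∃ Y : Set Lit, AnswerSetW Y Q)) := by
  constructor
  · rintro ⟨Y, hY⟩
    have hchoice : SatWC Y (choiceRule p q).head :=
      hY.2.1 (choiceRule p q) (mem_orProg.mpr (Or.inr (Or.inr rfl)))
        (by intro C hC; exact absurd hC List.not_mem_nil)
    rcases sat_choice_head.mp hchoice with ⟨hp', -⟩ | ⟨-, hq'⟩
    · exact Or.inl ⟨Y \ {Lit.pos p},
        main2 (fun r hr => hfresh r (Or.inl hr)) hY hp'⟩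
    · rw [orProg_comm] at hY
      exact Or.inr ⟨Y \ {Lit.pos q},
        main2 (fun r hr => (hfresh r (Or.inr hr)).symm) hY hq'⟩
  · rintro (⟨X, hX⟩ | ⟨X, hX⟩)
    · exact ⟨insert (Lit.pos p) X,
        main1 hpq (fun r hr => hfresh r (Or.inl hr)) hX⟩
    · refine ⟨insert (Lit.pos q) X, ?_⟩
      rw [orProg_comm]
      exact main1 (Ne.symm hpq) (fun r hr => (hfresh r (Or.inr hr)).symm) hX
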